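/- arXiv:1209.5732 — 7 statements merged into one kernel-verified Lean document; each statement's English description precedes it below -/
import Mathlib

section
/- Let A : ℓ¹(ℕ) → Y be a bounded linear operator into a Banach space Y with ‖A e_k‖_Y → 0, and suppose for every k there exists f_k ∈ Y* with A* f_k = e_k (i.e., ⟨f_k, A x⟩ = x_k for all x ∈ ℓ¹(ℕ)). Then the closure of the range of A* in ℓ^∞(ℕ) equals c₀. -/
open Filter Topology

/-- If `A : ℓ¹(ℕ) → Y` is bounded linear with `‖A e_k‖ → 0` and for every `k`
there is `f_k ∈ Y*` with `A* f_k = e_k`, then the closure of the range of `A*` in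
`ℓ^∞(ℕ)` equals `c₀`: every `A* w` lies in `c₀`, and every `z ∈ c₀` can be approximated
in the sup norm by elements `A* w`, `w ∈ Y*`. -/
theorem stmt4 {Y : Type*} [NormedAddCommGroup Y] [NormedSpace ℝ Y] [CompleteSpace Y]
    (A : lp (fun _ : ℕ => ℝ) 1 →L[ℝ] Y)
    (hAe : Tendsto (fun k : ℕ => ‖A (lp.single 1 k (1:ℝ))‖) atTop (𝓝 0))
    (f : ℕ → (Y →L[ℝ] ℝ))
    (hf : ∀ (k : ℕ) (x : lp (fun _ : ℕ => ℝ) 1), f k (A x) = x k) :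
    (∀ w : Y →L[ℝ] ℝ,
        Tendsto (fun k : ℕ => w (A (lp.single 1 k (1:ℝ)))) atTop (𝓝 0)) ∧
    (∀ z : ℕ → ℝ, Tendsto z atTop (𝓝 0) → ∀ ε > (0:ℝ),
        ∃ w : Y →L[ℝ] ℝ, ∀ k : ℕ, |z k - w (A (lp.single 1 k (1:ℝ)))| ≤ ε) := by
  have hA0 : Tendsto (fun k : ℕ => A (lp.single 1 k (1:ℝ))) atTop (𝓝 0) :=
    tendsto_zero_iff_norm_tendsto_zero.mpr hAe
  constructor
  · intro w
    have := (w.continuous.tendsto 0).comp hA0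
    simpa [Function.comp_def] using this
  · intro z hz ε hε
    obtain ⟨N, hN⟩ := (Metric.tendsto_atTop.mp hz ε hε)
    refine ⟨∑ j ∈ Finset.range N, z j • f j, fun k => ?_⟩
    have hw : (∑ j ∈ Finset.range N, z j • f j) (A (lp.single 1 k (1:ℝ))) =
        ∑ j ∈ Finset.range N, z j * (lp.single 1 k (1:ℝ) : ∀ _ : ℕ, ℝ) j := by
      simp [ContinuousLinearMap.sum_apply, hf]
    have hne : ∀ j : ℕ, j ≠ k → (lp.single 1 k (1:ℝ) : ∀ _ : ℕ, ℝ) j = 0 := fun j hj =>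
      lp.single_apply_ne (E := fun _ : ℕ => ℝ) 1 k (1:ℝ) hj
    by_cases hk : k < N
    · rw [hw, Finset.sum_eq_single k (fun j _ hj => by rw [hne j hj, mul_zero])
        (fun h => absurd (Finset.mem_range.mpr hk) h)]
      rw [lp.single_apply_self (E := fun _ : ℕ => ℝ) 1 k (1:ℝ)]
      simpa using hε.le
    · rw [hw, Finset.sum_eq_zero (fun j hj => by
        rw [hne j (fun h => hk (h ▸ Finset.mem_range.mp hj)), mul_zero]), sub_zero]
      have := hN k (le_of_not_gt hk)
      rw [Real.dist_eq, sub_zero] at this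
      exact this.le
end

section
/- Let A : ℓ¹(ℕ) → Y be a bounded linear operator with ‖A e_k‖_Y → 0. If ξ ∈ ℓ^∞(ℕ) satisfies s := limsup_{k→∞} |ξ_k| > 0, then for every R ≥ 0 the distance function d_ξ(R) := inf { ‖ξ − A*w‖_{ℓ^∞} : w ∈ Y*, ‖w‖_{Y*} ≤ R } satisfies d_ξ(R) ≥ s. -/
open Filter Topology

/-- If `A : ℓ¹(ℕ) → Y` is bounded linear with `‖A e_k‖ → 0` and
`ξ ∈ ℓ^∞(ℕ)` satisfies `s := limsup |ξ_k| > 0`, then for every `R ≥ 0` the distance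
function `d_ξ(R) = inf {‖ξ − A* w‖_∞ : ‖w‖ ≤ R}` satisfies `d_ξ(R) ≥ s`, i.e. for all
`w` with `‖w‖ ≤ R` one has `s ≤ sup_k |ξ_k − w (A e_k)|`. -/
theorem stmt5 {Y : Type*} [NormedAddCommGroup Y] [NormedSpace ℝ Y] [CompleteSpace Y]
    (A : lp (fun _ : ℕ => ℝ) 1 →L[ℝ] Y)
    (hAe : Tendsto (fun k : ℕ => ‖A (lp.single 1 k (1:ℝ))‖) atTop (𝓝 0))
    (ξ : ℕ → ℝ) (M : ℝ) (hbd : ∀ k, |ξ k| ≤ M)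
    (hs : 0 < Filter.limsup (fun k : ℕ => |ξ k|) atTop) :
    ∀ R : ℝ, 0 ≤ R → ∀ w : Y →L[ℝ] ℝ, ‖w‖ ≤ R →
      Filter.limsup (fun k : ℕ => |ξ k|) atTop ≤
        ⨆ k : ℕ, |ξ k - w (A (lp.single 1 k (1:ℝ)))| := by
  intro R hR w hw
  set g : ℕ → ℝ := fun k => w (A (lp.single 1 k (1:ℝ))) with hg
  have hg0 : Tendsto (fun k => |g k|) atTop (𝓝 0) := by
    have hb : ∀ k, |g k| ≤ ‖w‖ * ‖A (lp.single 1 k (1:ℝ))‖ := fun k => by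
      simpa [hg, Real.norm_eq_abs] using w.le_opNorm (A (lp.single 1 k (1:ℝ)))
    have : Tendsto (fun k : ℕ => ‖w‖ * ‖A (lp.single 1 k (1:ℝ))‖) atTop (𝓝 0) := by
      simpa using hAe.const_mul ‖w‖
    exact squeeze_zero (fun k => abs_nonneg _) hb this
  set f : ℕ → ℝ := fun k => |ξ k - g k| with hf
  -- bounded above
  obtain ⟨C, hC⟩ : ∃ C, ∀ k, |g k| ≤ C := by
    obtain ⟨C, hC⟩ := hg0.bddAbove_range
    exact ⟨C, fun k => hC ⟨k, rfl⟩⟩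
  have hfb : BddAbove (Set.range f) := by
    refine ⟨M + C, ?_⟩
    rintro x ⟨k, rfl⟩
    calc f k ≤ |ξ k| + |g k| := abs_sub _ _
    _ ≤ M + C := add_le_add (hbd k) (hC k)
  have hcob : IsCoboundedUnder (· ≤ ·) atTop (fun k : ℕ => |ξ k|) :=
    (Filter.isBoundedUnder_of ⟨0, fun k => abs_nonneg _⟩ :
      IsBoundedUnder (· ≥ ·) atTop fun k : ℕ => |ξ k|).isCoboundedUnder_le
  refine le_of_forall_lt fun c hc => ?_
  set ε : ℝ := (Filter.limsup (fun k : ℕ => |ξ k|) atTop - c) / 2 with hε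
  have hεpos : 0 < ε := by simp only [hε]; linarith
  have hfreq : ∃ᶠ k in atTop, c + ε < |ξ k| :=
    Filter.frequently_lt_of_lt_limsup hcob (by linarith [hεpos])
  have hev : ∀ᶠ k in atTop, |g k| < ε :=
    hg0.eventually (eventually_lt_nhds hεpos)
  obtain ⟨k, hk1, hk2⟩ := (hfreq.and_eventually hev).exists
  have : c < f k := by
    have : |ξ k| - |g k| ≤ f k := by
      have := abs_sub_abs_le_abs_sub (ξ k) (g k)
      simpa [hf] using this
    linarith
  exact lt_of_lt_of_le this (le_ciSup hfb k)
end

section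
/- Let A : ℓ¹(ℕ) → Y be a bounded linear operator with ‖A e_k‖_Y → 0, and let x† ∈ ℓ¹(ℕ) be non-sparse, i.e., x†_k ≠ 0 for infinitely many k. Then every subgradient ξ ∈ ∂‖·‖₁(x†) (an element ξ ∈ ℓ^∞ with ξ_k = sign(x†_k) when x†_k ≠ 0 and |ξ_k| ≤ 1 otherwise) satisfies inf { ‖ξ − A*w‖_{ℓ^∞} : w ∈ Y* } ≥ 1; in particular ξ is not in the closure of the range of A*. -/
open Filter Topology

/-- If `A : ℓ¹(ℕ) → Y` is bounded linear with `‖A e_k‖ → 0` and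
`x† ∈ ℓ¹(ℕ)` is non-sparse (infinitely many nonzero components), then every subgradient
`ξ ∈ ∂‖·‖₁(x†)` satisfies `inf {‖ξ − A* w‖_∞ : w ∈ Y*} ≥ 1`, i.e.
`1 ≤ sup_k |ξ_k − w (A e_k)|` for every `w ∈ Y*`; in particular `ξ` is not in the closure
of the range of `A*`. -/
theorem stmt6 {Y : Type*} [NormedAddCommGroup Y] [NormedSpace ℝ Y] [CompleteSpace Y]
    (A : lp (fun _ : ℕ => ℝ) 1 →L[ℝ] Y)
    (hAe : Tendsto (fun k : ℕ => ‖A (lp.single 1 k (1:ℝ))‖) atTop (𝓝 0))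
    (xdag : lp (fun _ : ℕ => ℝ) 1)
    (hnonsparse : {k : ℕ | xdag k ≠ 0}.Infinite)
    (ξ : ℕ → ℝ)
    (hsub₁ : ∀ k, 0 < xdag k → ξ k = 1)
    (hsub₂ : ∀ k, xdag k < 0 → ξ k = -1)
    (hsub₃ : ∀ k, |ξ k| ≤ 1) :
    ∀ w : Y →L[ℝ] ℝ, 1 ≤ ⨆ k : ℕ, |ξ k - w (A (lp.single 1 k (1:ℝ)))| := by
  intro w
  have hnorm1 : ∀ k : ℕ, ‖lp.single (E := fun _ : ℕ => ℝ) 1 k (1:ℝ)‖ = 1 := by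
    intro k
    have := lp.norm_single (E := fun _ : ℕ => ℝ) (p := 1) (by norm_num)
      k (1:ℝ)
    simpa using this
  have hb : ∀ k : ℕ, |w (A (lp.single 1 k (1:ℝ)))| ≤ ‖w‖ * ‖A (lp.single 1 k (1:ℝ))‖ :=
    fun k => w.le_opNorm _
  have hbdd : BddAbove (Set.range fun k : ℕ => |ξ k - w (A (lp.single 1 k (1:ℝ)))|) := by
    refine ⟨1 + ‖w‖ * ‖A‖, ?_⟩
    rintro _ ⟨k, rfl⟩
    have h2 : |w (A (lp.single 1 k (1:ℝ)))| ≤ ‖w‖ * ‖A‖ := by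
      calc |w (A (lp.single 1 k (1:ℝ)))| ≤ ‖w‖ * ‖A (lp.single 1 k (1:ℝ))‖ := hb k
        _ ≤ ‖w‖ * (‖A‖ * ‖lp.single (E := fun _ : ℕ => ℝ) 1 k (1:ℝ)‖) := by
            gcongr; exact A.le_opNorm _
        _ = ‖w‖ * ‖A‖ := by rw [hnorm1 k]; ring
    calc |ξ k - w (A (lp.single 1 k (1:ℝ)))|
        ≤ |ξ k| + |w (A (lp.single 1 k (1:ℝ)))| := abs_sub _ _
      _ ≤ 1 + ‖w‖ * ‖A‖ := add_le_add (hsub₃ k) h2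
  refine le_of_forall_pos_le_add ?_
  intro ε hε
  have hten : Tendsto (fun k : ℕ => ‖w‖ * ‖A (lp.single 1 k (1:ℝ))‖) atTop (𝓝 0) := by
    simpa using hAe.const_mul ‖w‖
  have hev : ∀ᶠ k in atTop, ‖w‖ * ‖A (lp.single 1 k (1:ℝ))‖ < ε := by
    have := hten.eventually (eventually_lt_nhds hε)  -- maybe wrong name
    exact this
  obtain ⟨N, hN⟩ := eventually_atTop.mp hev
  obtain ⟨k, hk, hkN⟩ := hnonsparse.exists_gt N
  have hξ : |ξ k| = 1 := by
    rcases lt_or_gt_of_ne hk with h | h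
    · rw [hsub₂ k h]; simp
    · rw [hsub₁ k h]; simp
  have hwk : |w (A (lp.single 1 k (1:ℝ)))| < ε := lt_of_le_of_lt (hb k) (hN k hkN.le)
  have hkey : 1 - ε ≤ |ξ k - w (A (lp.single 1 k (1:ℝ)))| := by
    have := abs_sub_abs_le_abs_sub (ξ k) (w (A (lp.single 1 k (1:ℝ))))
    rw [hξ] at this
    linarith
  have hle := le_ciSup hbdd k
  linarith
end

section
/- Let A : ℓ¹(ℕ) → Y be a bounded linear operator into a Banach space and suppose for each k ∈ ℕ there exists f_k ∈ Y* with ⟨f_k, A x⟩ = x_k for all x ∈ ℓ¹(ℕ). Then for all x, x† ∈ ℓ¹(ℕ) and all n ∈ ℕ: ‖x − x†‖₁ ≤ ‖x‖₁ − ‖x†‖₁ + 2( ∑_{k>n} |x†_k| + ‖A(x − x†)‖_Y · ∑_{k≤n} ‖f_k‖_{Y*} ). -/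
set_option maxHeartbeats 1000000

lemma lp_one_hasSum (z : lp (fun _ : ℕ => ℝ) 1) :
    HasSum (fun k => |z k|) ‖z‖ := by
  have h := lp.hasSum_norm (p := 1) (by norm_num) z
  simpa [Real.norm_eq_abs] using h

/-- If `A : ℓ¹(ℕ) → Y` is bounded linear and for each `k` there is
`f_k ∈ Y*` with `f_k (A x) = x_k` for all `x`, then for all `x, x† ∈ ℓ¹(ℕ)` and `n`:
`‖x − x†‖₁ ≤ ‖x‖₁ − ‖x†‖₁ + 2(∑_{k>n}|x†_k| + ‖A(x − x†)‖ ∑_{k≤n} ‖f_k‖)`. -/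
theorem stmt8 {Y : Type*} [NormedAddCommGroup Y] [NormedSpace ℝ Y] [CompleteSpace Y]
    (A : lp (fun _ : ℕ => ℝ) 1 →L[ℝ] Y)
    (f : ℕ → (Y →L[ℝ] ℝ))
    (hf : ∀ (k : ℕ) (x : lp (fun _ : ℕ => ℝ) 1), f k (A x) = x k)
    (x xdag : lp (fun _ : ℕ => ℝ) 1) (n : ℕ) :
    ‖x - xdag‖ ≤ ‖x‖ - ‖xdag‖ +
      2 * ((∑' k : ℕ, |xdag (k + n)|) +
        ‖A (x - xdag)‖ * ∑ k ∈ Finset.range n, ‖f k‖) := by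
  set h := x - xdag with hh
  have hx := lp_one_hasSum x
  have hxd := lp_one_hasSum xdag
  have hhs := lp_one_hasSum h
  have hsx : Summable fun k => |x k| := hx.summable
  have hsxd : Summable fun k => |xdag k| := hxd.summable
  have hsh : Summable fun k => |h k| := hhs.summable
  -- splits
  have sx : ‖x‖ = ∑ k ∈ Finset.range n, |x k| + ∑' k, |x (k + n)| := by
    rw [← hx.tsum_eq]; exact (Summable.sum_add_tsum_nat_add n hsx).symm
  have sxd : ‖xdag‖ = ∑ k ∈ Finset.range n, |xdag k| + ∑' k, |xdag (k + n)| := by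
    rw [← hxd.tsum_eq]; exact (Summable.sum_add_tsum_nat_add n hsxd).symm
  have sh : ‖h‖ = ∑ k ∈ Finset.range n, |h k| + ∑' k, |h (k + n)| := by
    rw [← hhs.tsum_eq]; exact (Summable.sum_add_tsum_nat_add n hsh).symm
  -- coordinates of h
  have hcoe : ∀ k, h k = x k - xdag k := fun k => by
    rw [hh]; simp [lp.coeFn_sub]
  -- tail triangle: ∑' |x(k+n)| ≥ ∑' |h(k+n)| - ∑' |xdag(k+n)|
  have hsx' : Summable fun k => |x (k + n)| := (summable_nat_add_iff n).2 hsx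
  have hsxd' : Summable fun k => |xdag (k + n)| := (summable_nat_add_iff n).2 hsxd
  have hsh' : Summable fun k => |h (k + n)| := (summable_nat_add_iff n).2 hsh
  have tail : ∑' k, |h (k + n)| ≤ ∑' k, |x (k + n)| + ∑' k, |xdag (k + n)| := by
    calc ∑' k, |h (k + n)| ≤ ∑' k, (|x (k + n)| + |xdag (k + n)|) := by
          refine Summable.tsum_le_tsum (fun k => ?_) hsh' (hsx'.add hsxd')
          show |h (k + n)| ≤ |x (k + n)| + |xdag (k + n)|
          rw [hcoe]; exact abs_sub _ _
      _ = ∑' k, |x (k + n)| + ∑' k, |xdag (k + n)| := Summable.tsum_add hsx' hsxd'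
  -- head triangle: ∑ |xdag k| ≤ ∑ |x k| + ∑ |h k|
  have head : ∑ k ∈ Finset.range n, |xdag k| ≤
      ∑ k ∈ Finset.range n, |x k| + ∑ k ∈ Finset.range n, |h k| := by
    rw [← Finset.sum_add_distrib]
    refine Finset.sum_le_sum fun k _ => ?_
    have : xdag k = x k - h k := by rw [hcoe]; ring
    rw [this]
    exact (abs_sub _ _)
  -- functional bound
  have fb : ∑ k ∈ Finset.range n, |h k| ≤ ‖A h‖ * ∑ k ∈ Finset.range n, ‖f k‖ := by
    rw [Finset.mul_sum]
    refine Finset.sum_le_sum fun k _ => ?_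
    have := hf k h
    calc |h k| = |f k (A h)| := by rw [this]
      _ ≤ ‖f k‖ * ‖A h‖ := by
          simpa [Real.norm_eq_abs] using (f k).le_opNorm (A h)
      _ = ‖A h‖ * ‖f k‖ := mul_comm _ _
  linarith
end

section
/- Under Assumption: A : ℓ¹(ℕ) → Y bounded linear, f_k ∈ Y* with ⟨f_k, Ax⟩ = x_k for all x, and x† ∈ ℓ¹(ℕ). Define φ(t) := 2 inf_{n} ( ∑_{k>n} |x†_k| + t ∑_{k≤n} ‖f_k‖_{Y*} ). Then the variational inequality ‖x − x†‖₁ ≤ ‖x‖₁ − ‖x†‖₁ + φ(‖A(x − x†)‖_Y) holds for all x ∈ ℓ¹(ℕ). -/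
set_option maxHeartbeats 1000000


/-- If `A : ℓ¹(ℕ) → Y` is bounded linear, `f_k ∈ Y*` satisfy
`f_k (A x) = x_k`, and `x† ∈ ℓ¹(ℕ)`, then with
`φ(t) = 2 inf_n (∑_{k>n} |x†_k| + t ∑_{k≤n} ‖f_k‖)` the variational inequality
`‖x − x†‖₁ ≤ ‖x‖₁ − ‖x†‖₁ + φ(‖A(x − x†)‖)` holds for all `x ∈ ℓ¹(ℕ)`. -/
theorem stmt12 {Y : Type*} [NormedAddCommGroup Y] [NormedSpace ℝ Y] [CompleteSpace Y]
    (A : lp (fun _ : ℕ => ℝ) 1 →L[ℝ] Y)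
    (f : ℕ → (Y →L[ℝ] ℝ))
    (hf : ∀ (k : ℕ) (x : lp (fun _ : ℕ => ℝ) 1), f k (A x) = x k)
    (xdag : lp (fun _ : ℕ => ℝ) 1) :
    ∀ x : lp (fun _ : ℕ => ℝ) 1,
      ‖x - xdag‖ ≤ ‖x‖ - ‖xdag‖ +
        2 * ⨅ n : ℕ, ((∑' k : ℕ, |xdag (k + n)|) +
          ‖A (x - xdag)‖ * ∑ k ∈ Finset.range n, ‖f k‖) := by
  intro x
  have hsum : ∀ v : lp (fun _ : ℕ => ℝ) 1, Summable fun k => |v k| := by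
    intro v
    have := (lp.memℓp v).summable (p := 1) (by norm_num)
    simpa [Real.norm_eq_abs] using this
  have hnorm : ∀ v : lp (fun _ : ℕ => ℝ) 1, ‖v‖ = ∑' k, |v k| := by
    intro v
    rw [lp.norm_eq_tsum_rpow (by norm_num) v]
    simp [Real.norm_eq_abs]
  set e := x - xdag with he
  have hek : ∀ k, e k = x k - xdag k := by
    intro k; rw [he]; simp
  have key : ∀ n : ℕ, ‖e‖ + ‖xdag‖ - ‖x‖ ≤
      2 * ((∑' k : ℕ, |xdag (k + n)|) + ‖A e‖ * ∑ k ∈ Finset.range n, ‖f k‖) := by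
    intro n
    rw [hnorm e, hnorm xdag, hnorm x]
    rw [← Summable.sum_add_tsum_nat_add n (hsum e), ← Summable.sum_add_tsum_nat_add n (hsum xdag),
      ← Summable.sum_add_tsum_nat_add n (hsum x)]
    have hS1 : ∑ k ∈ Finset.range n, |e k| ≤ ‖A e‖ * ∑ k ∈ Finset.range n, ‖f k‖ := by
      rw [Finset.mul_sum]
      refine Finset.sum_le_sum fun k _ => ?_
      have : |e k| = ‖f k (A e)‖ := by rw [hf k e, Real.norm_eq_abs]
      rw [this, mul_comm]
      exact (f k).le_opNorm (A e)
    have hS2 : ∑ k ∈ Finset.range n, |xdag k| - ∑ k ∈ Finset.range n, |x k|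
        ≤ ∑ k ∈ Finset.range n, |e k| := by
      rw [← Finset.sum_sub_distrib]
      refine Finset.sum_le_sum fun k _ => ?_
      rw [hek k]
      have := abs_sub_abs_le_abs_sub (xdag k) (x k)
      have h2 : |xdag k - x k| = |x k - xdag k| := abs_sub_comm _ _
      linarith
    have hT : (∑' k : ℕ, |e (k + n)|) ≤
        (∑' k : ℕ, |x (k + n)|) + ∑' k : ℕ, |xdag (k + n)| := by
      rw [← Summable.tsum_add ((summable_nat_add_iff n).mpr (hsum x))
        ((summable_nat_add_iff n).mpr (hsum xdag))]
      refine Summable.tsum_le_tsum (fun k => ?_) ((summable_nat_add_iff n).mpr (hsum e))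
        (((summable_nat_add_iff n).mpr (hsum x)).add
          ((summable_nat_add_iff n).mpr (hsum xdag)))
      rw [hek]
      exact (abs_sub _ _)
    linarith
  have hinf : (‖e‖ + ‖xdag‖ - ‖x‖) / 2 ≤
      ⨅ n : ℕ, ((∑' k : ℕ, |xdag (k + n)|) + ‖A e‖ * ∑ k ∈ Finset.range n, ‖f k‖) :=
    le_ciInf fun n => by linarith [key n]
  linarith
end

section
/- Let A : ℓ¹(ℕ) → Y be a bounded linear operator. Suppose there exist x̄ ∈ ℓ¹(ℕ) with x̄_k ≠ 0 for all k, a constant β > 0, and an index function φ (continuous, strictly increasing on [0,∞) with φ(0)=0) such that β ‖x − x̄‖₁ ≤ ‖x‖₁ − ‖x̄‖₁ + φ(‖A(x − x̄)‖_Y) for all x ∈ ℓ¹(ℕ). Then A is injective. -/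
set_option maxHeartbeats 1000000

private lemma abs_add_add_abs_sub_eq {a b : ℝ} (hb : |b| ≤ |a|) :
    |a + b| + |a - b| = 2 * |a| := by
  rcases le_total 0 a with ha | ha
  · rw [abs_of_nonneg ha] at hb
    obtain ⟨h1, h2⟩ := abs_le.1 hb
    rw [abs_of_nonneg (by linarith), abs_of_nonneg (by linarith), abs_of_nonneg ha]; ring
  · rw [abs_of_nonpos ha] at hb
    obtain ⟨h1, h2⟩ := abs_le.1 hb
    rw [abs_of_nonpos (by linarith), abs_of_nonpos (by linarith), abs_of_nonpos ha]; ring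

private lemma lp_one_norm_eq (y : lp (fun _ : ℕ => ℝ) 1) : ‖y‖ = ∑' k, |y k| := by
  have := lp.norm_eq_tsum_rpow (p := 1) (by norm_num) y
  simpa [Real.rpow_one] using this

private lemma lp_one_summable (y : lp (fun _ : ℕ => ℝ) 1) : Summable fun k => |y k| := by
  have := (lp.memℓp y).summable (p := 1) (by norm_num)
  simpa [Real.rpow_one] using this

/-- Suppose `A : ℓ¹(ℕ) → Y` is bounded linear and there exist `x̄ ∈ ℓ¹(ℕ)`
with `x̄_k ≠ 0` for all `k`, a constant `β > 0` and an index function `φ`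
(continuous, strictly increasing on `[0,∞)`, `φ(0) = 0`) with
`β ‖x − x̄‖₁ ≤ ‖x‖₁ − ‖x̄‖₁ + φ(‖A(x − x̄)‖)` for all `x`. Then `A` is injective. -/
theorem stmt15 {Y : Type*} [NormedAddCommGroup Y] [NormedSpace ℝ Y]
    (A : lp (fun _ : ℕ => ℝ) 1 →L[ℝ] Y)
    (xbar : lp (fun _ : ℕ => ℝ) 1) (hxbar : ∀ k : ℕ, xbar k ≠ 0)
    (β : ℝ) (hβ : 0 < β)
    (φ : ℝ → ℝ) (hφcont : ContinuousOn φ (Set.Ici (0:ℝ)))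
    (hφmono : StrictMonoOn φ (Set.Ici (0:ℝ))) (hφ0 : φ 0 = 0)
    (hvi : ∀ x : lp (fun _ : ℕ => ℝ) 1,
      β * ‖x - xbar‖ ≤ ‖x‖ - ‖xbar‖ + φ ‖A (x - xbar)‖) :
    Function.Injective A := by
  intro u v huv
  rw [← sub_eq_zero]
  set h : lp (fun _ : ℕ => ℝ) 1 := u - v with hh
  have hAh : A h = 0 := by rw [hh, map_sub, huv, sub_self]
  -- Key inequality from the variational inequality, for every real s:
  have key : ∀ s : ℝ, β * ‖s • h‖ ≤ ‖xbar + s • h‖ - ‖xbar‖ := by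
    intro s
    have := hvi (xbar + s • h)
    have e : xbar + s • h - xbar = s • h := by abel
    rw [e] at this
    have : β * ‖s • h‖ ≤ ‖xbar + s • h‖ - ‖xbar‖ + φ ‖A (s • h)‖ := this
    simpa [map_smul, hAh, smul_zero, hφ0] using this
  -- the quotient function
  set f : ℝ → ℕ → ℝ :=
    fun t k => (|xbar k + t * h k| + |xbar k - t * h k| - 2 * |xbar k|) / t with hf
  have hsumh : Summable fun k => |h k| := lp_one_summable h
  -- dominated convergence: tsum of f tends to 0 as t → 0⁺
  have htend : Filter.Tendsto (fun t => ∑' k, f t k) (nhdsWithin 0 (Set.Ioi 0))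
      (nhds (0 : ℝ)) := by
    have main := tendsto_tsum_of_dominated_convergence
      (𝓕 := nhdsWithin 0 (Set.Ioi 0)) (f := f) (g := fun _ => (0:ℝ))
      (bound := fun k => 2 * |h k|) (hsumh.mul_left 2) ?_ ?_
    · simpa using main
    · intro k
      have hδ : 0 < |xbar k| / (|h k| + 1) :=
        div_pos (abs_pos.2 (hxbar k)) (by positivity)
      have hev : ∀ᶠ t in nhdsWithin 0 (Set.Ioi 0), f t k = 0 := by
        filter_upwards [Ioo_mem_nhdsGT_of_mem
          (Set.mem_Ico.2 ⟨le_refl (0:ℝ), hδ⟩)] with t ht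
        obtain ⟨ht0, htδ⟩ := ht
        have hb : |t * h k| ≤ |xbar k| := by
          rw [abs_mul, abs_of_pos ht0]
          calc t * |h k| ≤ t * (|h k| + 1) := by nlinarith
            _ ≤ (|xbar k| / (|h k| + 1)) * (|h k| + 1) := by
                apply mul_le_mul_of_nonneg_right htδ.le (by positivity)
            _ = |xbar k| := by field_simp
        have := abs_add_add_abs_sub_eq (a := xbar k) (b := t * h k) hb
        simp only [hf]
        rw [this, sub_self, zero_div]
      have hev' : (fun t => f t k) =ᶠ[nhdsWithin 0 (Set.Ioi 0)] (fun _ => (0:ℝ)) := hev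
      exact Filter.Tendsto.congr' hev'.symm tendsto_const_nhds
    · filter_upwards [self_mem_nhdsWithin] with t (ht : (0:ℝ) < t)
      intro k
      have hnum0 : 0 ≤ |xbar k + t * h k| + |xbar k - t * h k| - 2 * |xbar k| := by
        have : 2 * |xbar k| = |(xbar k + t * h k) + (xbar k - t * h k)| := by
          rw [show (xbar k + t * h k) + (xbar k - t * h k) = 2 * xbar k by ring,
            abs_mul]; norm_num
        rw [this]
        linarith [abs_add_le (xbar k + t * h k) (xbar k - t * h k)]
      have hnum2 : |xbar k + t * h k| + |xbar k - t * h k| - 2 * |xbar k|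
          ≤ 2 * (t * |h k|) := by
        have h1 := abs_add_le (xbar k) (t * h k)
        have h2 := abs_sub (xbar k) (t * h k)
        rw [abs_mul, abs_of_pos ht] at h1 h2
        linarith
      have : ‖f t k‖ = f t k := by
        rw [Real.norm_eq_abs, abs_of_nonneg (div_nonneg hnum0 ht.le)]
      rw [this, hf, div_le_iff₀ ht]
      calc |xbar k + t * h k| + |xbar k - t * h k| - 2 * |xbar k|
          ≤ 2 * (t * |h k|) := hnum2
        _ = 2 * |h k| * t := by ring
  -- eventually, 2β‖h‖ ≤ ∑' f t k
  have hev2 : ∀ᶠ t in nhdsWithin 0 (Set.Ioi 0), 2 * β * ‖h‖ ≤ ∑' k, f t k := by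
    filter_upwards [self_mem_nhdsWithin] with t (ht : (0:ℝ) < t)
    have k1 := key t
    have k2 := key (-t)
    have hnorm : ‖t • h‖ = t * ‖h‖ := by
      rw [norm_smul, Real.norm_eq_abs, abs_of_pos ht]
    have hnorm' : ‖(-t) • h‖ = t * ‖h‖ := by
      rw [norm_smul, Real.norm_eq_abs, abs_neg, abs_of_pos ht]
    rw [hnorm] at k1; rw [hnorm'] at k2
    have hsub : xbar + (-t) • h = xbar - t • h := by
      rw [neg_smul, ← sub_eq_add_neg]
    rw [hsub] at k2
    -- norms as tsums
    have hp1 : ∀ k : ℕ, (xbar + t • h) k = xbar k + t * h k := fun k => by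
      rfl
    have hp2 : ∀ k : ℕ, (xbar - t • h) k = xbar k - t * h k := fun k => by
      rfl
    have n1 : ‖xbar + t • h‖ = ∑' k, |xbar k + t * h k| := by
      rw [lp_one_norm_eq]
      exact tsum_congr fun k => by rw [hp1 k]
    have n2 : ‖xbar - t • h‖ = ∑' k, |xbar k - t * h k| := by
      rw [lp_one_norm_eq]
      exact tsum_congr fun k => by rw [hp2 k]
    have n3 : ‖xbar‖ = ∑' k, |xbar k| := lp_one_norm_eq xbar
    -- summabilities
    have s1 : Summable fun k => |xbar k + t * h k| :=
      (lp_one_summable (xbar + t • h)).congr fun k => by rw [hp1 k]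
    have s2 : Summable fun k => |xbar k - t * h k| :=
      (lp_one_summable (xbar - t • h)).congr fun k => by rw [hp2 k]
    have s3 : Summable fun k => |xbar k| := lp_one_summable xbar
    have hsum_eq : ∑' k, f t k
        = (‖xbar + t • h‖ + ‖xbar - t • h‖ - 2 * ‖xbar‖) / t := by
      simp only [hf]
      rw [tsum_div_const, n1, n2, n3]
      congr 1
      rw [Summable.tsum_sub (s1.add s2) (s3.mul_left 2), Summable.tsum_add s1 s2, tsum_mul_left]
    rw [hsum_eq, le_div_iff₀ ht]
    nlinarith [k1, k2]
  have hfin : 2 * β * ‖h‖ ≤ 0 := ge_of_tendsto htend hev2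
  have : ‖h‖ ≤ 0 := by nlinarith
  exact norm_le_zero_iff.1 this
end

section
/- Let Ã : X̃ → Y be an injective bounded linear operator between Banach spaces whose range is not closed, and let L : ℓ¹(ℕ) → X̃ be a bounded linear operator with dense range. Then the range of A := Ã ∘ L is not closed in Y. -/
/-- If `At : Xt → Y` is an injective bounded linear operator between Banach
spaces whose range is not closed, and `L : ℓ¹(ℕ) → Xt` is bounded linear with dense range,
then the range of `A = At ∘ L` is not closed in `Y`. -/
theorem stmt17 {Xt Y : Type*} [NormedAddCommGroup Xt] [NormedSpace ℝ Xt] [CompleteSpace Xt]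
    [NormedAddCommGroup Y] [NormedSpace ℝ Y] [CompleteSpace Y]
    (At : Xt →L[ℝ] Y) (hinj : Function.Injective At)
    (hnc : ¬ IsClosed (Set.range At))
    (L : lp (fun _ : ℕ => ℝ) 1 →L[ℝ] Xt) (hdense : DenseRange L) :
    ¬ IsClosed (Set.range (fun x : lp (fun _ : ℕ => ℝ) 1 => At (L x))) := by
  intro h
  apply hnc
  have heq : Set.range At = Set.range (fun x : lp (fun _ : ℕ => ℝ) 1 => At (L x)) := by
    apply Set.Subset.antisymm
    · intro y hy
      obtain ⟨x, rfl⟩ := hy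
      have h1 : At x ∈ closure (At '' Set.range L) := by
        have hx : x ∈ closure (Set.range L) := by
          rw [hdense.closure_range]; trivial
        exact (image_closure_subset_closure_image At.continuous) ⟨x, hx, rfl⟩
      have h2 : At '' Set.range L = Set.range (fun x : lp (fun _ : ℕ => ℝ) 1 => At (L x)) := by
        rw [← Set.range_comp]; rfl
      rw [h2, h.closure_eq] at h1
      exact h1
    · rintro y ⟨x, rfl⟩
      exact ⟨L x, rfl⟩
  rw [heq]
  exact h
end
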